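/- Let (H,R) be a quasitriangular crossed Hopf π-coalgebra with Drinfeld elements u_α. Then for all α,β ∈ π, φ_β(u_α) = u_{βαβ⁻¹}. -/

import Mathlib

/- Crossed Hopf π-coalgebras (Turaev coalgebras). -/

open TensorProduct

universe u

variable (k : Type u) [Field k] (π : Type u) [Group π]

/-- Cast along an equality of indices, as a `k`-linear map. -/
def lcast (A : π → Type u) [∀ α, Ring (A α)] [∀ α, Algebra k (A α)]
    {α β : π} (h : α = β) : A α →ₗ[k] A β where
  toFun x := cast (congrArg A h) x
  map_add' := by subst h; intro x y; rfl
  map_smul' := by subst h; intro c x; rfl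

/-- A crossed Hopf `π`-coalgebra (Turaev coalgebra) structure on a family of
`k`-algebras `A α`. -/
structure TCoalgStruct (A : π → Type u) [∀ α, Ring (A α)] [∀ α, Algebra k (A α)] where
  /-- comultiplication -/
  Δ : ∀ α β : π, A (α * β) →ₐ[k] (A α ⊗[k] A β)
  /-- counit -/
  ε : A 1 →ₐ[k] k
  /-- antipode -/
  s : ∀ α : π, A α →ₗ[k] A α⁻¹
  /-- conjugation -/
  φ : ∀ β α : π, A α →ₐ[k] A (β * α * β⁻¹)
  φ_bij : ∀ β α : π, Function.Bijective (φ β α)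
  coassoc : ∀ (α β γ : π) (h : A (α * β * γ)),
    (TensorProduct.assoc k (A α) (A β) (A γ))
        (TensorProduct.map (Δ α β).toLinearMap LinearMap.id (Δ (α * β) γ h)) =
      TensorProduct.map LinearMap.id (Δ β γ).toLinearMap
        (Δ α (β * γ) (cast (congrArg A (mul_assoc α β γ)) h))
  counit_left : ∀ (α : π) (h : A (1 * α)),
    TensorProduct.lid k (A α)
        (TensorProduct.map (ε).toLinearMap LinearMap.id (Δ 1 α h)) =
      cast (congrArg A (one_mul α)) h
  counit_right : ∀ (α : π) (h : A (α * 1)),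
    TensorProduct.rid k (A α)
        (TensorProduct.map LinearMap.id (ε).toLinearMap (Δ α 1 h)) =
      cast (congrArg A (mul_one α)) h
  antipode_right : ∀ (α : π) (h : A (α * α⁻¹)),
    LinearMap.mul' k (A α)
        (TensorProduct.map LinearMap.id
          ((lcast k π A (inv_inv α)).comp (s α⁻¹)) (Δ α α⁻¹ h)) =
      algebraMap k (A α) (ε (cast (congrArg A (by group : α * α⁻¹ = 1)) h))
  antipode_left : ∀ (α : π) (h : A (α⁻¹ * α)),
    LinearMap.mul' k (A α)
        (TensorProduct.map ((lcast k π A (inv_inv α)).comp (s α⁻¹)) LinearMap.id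
          (Δ α⁻¹ α h)) =
      algebraMap k (A α) (ε (cast (congrArg A (by group : α⁻¹ * α = 1)) h))
  φ_mul : ∀ (β γ α : π) (h : A α),
    cast (congrArg A (by group : β * (γ * α * γ⁻¹) * β⁻¹ = β * γ * α * (β * γ)⁻¹))
        (φ β (γ * α * γ⁻¹) (φ γ α h)) = φ (β * γ) α h
  φ_comul : ∀ (γ α β : π) (h : A (α * β)),
    TensorProduct.map (φ γ α).toLinearMap (φ γ β).toLinearMap (Δ α β h) =
      Δ (γ * α * γ⁻¹) (γ * β * γ⁻¹)
        (cast (congrArg A (by group : γ * (α * β) * γ⁻¹ = γ * α * γ⁻¹ * (γ * β * γ⁻¹)))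
          (φ γ (α * β) h))
  φ_counit : ∀ (γ : π) (h : A 1),
    ε (cast (congrArg A (by group : γ * 1 * γ⁻¹ = 1)) (φ γ 1 h)) = ε h

/-- A quasitriangular structure (universal R-matrix) on a crossed Hopf
`π`-coalgebra. -/
structure QTStruct (A : π → Type u) [∀ α, Ring (A α)] [∀ α, Algebra k (A α)]
    (T : TCoalgStruct k π A) where
  /-- the universal R-matrix -/
  R : ∀ α β : π, A α ⊗[k] A β
  /-- its inverse -/
  Rinv : ∀ α β : π, A α ⊗[k] A β
  R_inv_left : ∀ α β : π, Rinv α β * R α β = 1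
  R_inv_right : ∀ α β : π, R α β * Rinv α β = 1
  R_rel1 : ∀ (α β : π) (h : A (α * β)),
    R α β * T.Δ α β h =
      ((TensorProduct.comm k (A β) (A α))
        (TensorProduct.map
          ((lcast k π A (by group : α⁻¹ * (α * β * α⁻¹) * α⁻¹⁻¹ = β)).comp
            (T.φ α⁻¹ (α * β * α⁻¹)).toLinearMap) LinearMap.id
          (T.Δ (α * β * α⁻¹) α
            (cast (congrArg A (by group : α * β = α * β * α⁻¹ * α)) h)))) * R α β
  R_rel2 : ∀ α β γ : π,
    TensorProduct.map LinearMap.id (T.Δ β γ).toLinearMap (R α (β * γ)) =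
      (TensorProduct.map LinearMap.id ((TensorProduct.mk k (A β) (A γ)) 1) (R α γ)) *
      (TensorProduct.map LinearMap.id ((TensorProduct.mk k (A β) (A γ)).flip 1) (R α β))
  R_rel3 : ∀ α β γ : π,
    TensorProduct.map (T.Δ α β).toLinearMap LinearMap.id (R (α * β) γ) =
      (TensorProduct.map ((TensorProduct.mk k (A α) (A β)).flip 1) LinearMap.id
        (TensorProduct.map
          ((lcast k π A (by group : β * (β⁻¹ * α * β) * β⁻¹ = α)).comp
            (T.φ β (β⁻¹ * α * β)).toLinearMap) LinearMap.id (R (β⁻¹ * α * β) γ))) *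
      (TensorProduct.map ((TensorProduct.mk k (A α) (A β)) 1) LinearMap.id (R β γ))
  R_phi : ∀ α β γ : π,
    TensorProduct.map (T.φ α β).toLinearMap (T.φ α γ).toLinearMap (R β γ) =
      R (α * β * α⁻¹) (α * γ * α⁻¹)

/-- The `α`-th Drinfeld element `u_α = (s_{α⁻¹} ∘ φ_α)(ζ_{(α⁻¹).i}) · ξ_{(α).i}`
of a quasitriangular crossed Hopf `π`-coalgebra. -/
noncomputable def drinfeld
    (A : π → Type u) [∀ α, Ring (A α)] [∀ α, Algebra k (A α)]
    (T : TCoalgStruct k π A) (Q : QTStruct k π A T) (α : π) : A α :=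
  LinearMap.mul' k (A α)
    ((TensorProduct.comm k (A α) (A α))
      (TensorProduct.map LinearMap.id
        ((lcast k π A (inv_inv α)).comp ((T.s α⁻¹).comp
          ((lcast k π A (by group : α * α⁻¹ * α⁻¹ = α⁻¹)).comp
            (T.φ α α⁻¹).toLinearMap)))
        (Q.R α α⁻¹)))

set_option linter.unusedSectionVars false

section Aux
variable {k : Type u} [Field k] {π : Type u} [Group π]
variable {A : π → Type u} [∀ α, Ring (A α)] [∀ α, Algebra k (A α)]

theorem lcast_apply {α β : π} (h : α = β) (x : A α) :
    lcast k π A h x = cast (congrArg A h) x := rfl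

theorem lcast_rfl {α : π} : lcast k π A (rfl : α = α) = LinearMap.id := rfl

theorem lcast_rfl_apply {α : π} (h : α = α) (x : A α) : lcast k π A h x = x := by
  rw [lcast_apply, cast_eq]

/-- The normalized antipode `A γ⁻¹ → A γ`. -/
def Tm (T : TCoalgStruct k π A) (γ : π) : A γ⁻¹ →ₗ[k] A γ :=
  (lcast k π A (inv_inv γ)).comp (T.s γ⁻¹)

theorem phi_cast_fst (T : TCoalgStruct k π A) {b b' : π} (h : b = b') (a : π) (x : A a) :
    T.φ b' a x = cast (congrArg A (by rw [h])) (T.φ b a x) := by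
  subst h; exact (cast_eq _ _).symm

theorem phi_cast_snd (T : TCoalgStruct k π A) (b : π) {a a' : π} (h : a = a') (x : A a) :
    T.φ b a' (cast (congrArg A h) x) = cast (congrArg A (by rw [h])) (T.φ b a x) := by
  subst h; rw [cast_eq, cast_eq]

theorem Δ_cast (T : TCoalgStruct k π A) {a a' b b' : π} (ha : a = a') (hb : b = b')
    (h : A (a * b)) :
    T.Δ a' b' (cast (congrArg A (by rw [ha, hb])) h) =
      TensorProduct.map (lcast k π A ha) (lcast k π A hb) (T.Δ a b h) := by
  subst ha; subst hb
  rw [cast_eq]; simp only [lcast_rfl]; rw [TensorProduct.map_id, LinearMap.id_apply]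

theorem algHom_mul' {B C : Type u} [Ring B] [Ring C] [Algebra k B] [Algebra k C]
    (g : B →ₐ[k] C) (t : B ⊗[k] B) :
    g (LinearMap.mul' k B t) =
      LinearMap.mul' k C (TensorProduct.map g.toLinearMap g.toLinearMap t) := by
  induction t using TensorProduct.induction_on with
  | zero => simp
  | tmul a b => simp [LinearMap.mul'_apply]
  | add x y hx hy => simp only [map_add, hx, hy]

theorem comm_map {B C B' C' : Type u} [AddCommMonoid B] [AddCommMonoid C]
    [AddCommMonoid B'] [AddCommMonoid C'] [Module k B] [Module k C] [Module k B']
    [Module k C'] (f : B →ₗ[k] B') (g : C →ₗ[k] C') (t : B ⊗[k] C) :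
    TensorProduct.map g f ((TensorProduct.comm k B C) t) =
      (TensorProduct.comm k B' C') (TensorProduct.map f g t) := by
  induction t using TensorProduct.induction_on with
  | zero => simp
  | tmul a b => simp
  | add x y hx hy => simp only [map_add, hx, hy]

theorem map_map {B C B' C' B'' C'' : Type u} [AddCommMonoid B] [AddCommMonoid C]
    [AddCommMonoid B'] [AddCommMonoid C'] [AddCommMonoid B''] [AddCommMonoid C'']
    [Module k B] [Module k C] [Module k B'] [Module k C'] [Module k B''] [Module k C'']
    (f : B' →ₗ[k] B'') (g : C' →ₗ[k] C'') (f' : B →ₗ[k] B') (g' : C →ₗ[k] C')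
    (t : B ⊗[k] C) :
    TensorProduct.map f g (TensorProduct.map f' g' t) =
      TensorProduct.map (f.comp f') (g.comp g') t := by
  rw [TensorProduct.map_comp]; rfl

end Aux

section Unique
set_option linter.unusedSectionVars false
variable {k : Type u} [Field k] {π : Type u} [Group π]
variable {A : π → Type u} [∀ α, Ring (A α)] [∀ α, Algebra k (A α)]

theorem antipode_right' (T : TCoalgStruct k π A) (δ : π) (h : A (δ * δ⁻¹)) :
    LinearMap.mul' k (A δ)
        (TensorProduct.map LinearMap.id (Tm T δ) (T.Δ δ δ⁻¹ h)) =
      algebraMap k (A δ) (T.ε (cast (congrArg A (mul_inv_cancel δ)) h)) :=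
  T.antipode_right δ h

theorem Tm_unique (T : TCoalgStruct k π A) (δ : π) (f : A δ⁻¹ →ₗ[k] A δ)
    (hf : ∀ h : A (δ⁻¹ * δ),
      LinearMap.mul' k (A δ) (TensorProduct.map f LinearMap.id (T.Δ δ⁻¹ δ h)) =
        algebraMap k (A δ) (T.ε (cast (congrArg A (inv_mul_cancel δ)) h))) :
    f = Tm T δ := by
  have h1 : δ⁻¹ * δ = 1 := inv_mul_cancel δ
  have h2 : δ * δ⁻¹ = 1 := mul_inv_cancel δ
  apply LinearMap.ext; intro x
  set G : (A δ⁻¹ ⊗[k] A δ) ⊗[k] A δ⁻¹ →ₗ[k] A δ :=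
    (LinearMap.mul' k (A δ)).comp
      (TensorProduct.map ((LinearMap.mul' k (A δ)).comp (TensorProduct.map f LinearMap.id))
        (Tm T δ)) with hG
  set F : A δ⁻¹ ⊗[k] (A δ ⊗[k] A δ⁻¹) →ₗ[k] A δ :=
    (LinearMap.mul' k (A δ)).comp
      (TensorProduct.map f
        ((LinearMap.mul' k (A δ)).comp (TensorProduct.map LinearMap.id (Tm T δ)))) with hF
  have claim1 : ∀ w : A (δ⁻¹ * δ) ⊗[k] A δ⁻¹,
      G (TensorProduct.map (T.Δ δ⁻¹ δ).toLinearMap LinearMap.id w) =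
        Tm T δ ((TensorProduct.lid k (A δ⁻¹))
          (TensorProduct.map (T.ε.toLinearMap.comp (lcast k π A h1)) LinearMap.id w)) := by
    intro w
    induction w using TensorProduct.induction_on with
    | zero => simp
    | tmul a b =>
      rw [TensorProduct.map_tmul, TensorProduct.map_tmul, hG]
      simp only [LinearMap.comp_apply, TensorProduct.map_tmul, LinearMap.id_apply,
        LinearMap.mul'_apply, TensorProduct.lid_tmul, map_smul, AlgHom.toLinearMap_apply]
      rw [hf a, ← Algebra.smul_def]
      rfl
    | add u v hu hv => simp only [map_add, hu, hv]
  have claim2 : ∀ w : A δ⁻¹ ⊗[k] A (δ * δ⁻¹),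
      F (TensorProduct.map LinearMap.id (T.Δ δ δ⁻¹).toLinearMap w) =
        f ((TensorProduct.rid k (A δ⁻¹))
          (TensorProduct.map LinearMap.id (T.ε.toLinearMap.comp (lcast k π A h2)) w)) := by
    intro w
    induction w using TensorProduct.induction_on with
    | zero => simp
    | tmul a b =>
      rw [TensorProduct.map_tmul, TensorProduct.map_tmul, hF]
      simp only [LinearMap.comp_apply, TensorProduct.map_tmul, LinearMap.id_apply,
        LinearMap.mul'_apply, TensorProduct.rid_tmul, map_smul, AlgHom.toLinearMap_apply]
      rw [antipode_right' T δ b, ← Algebra.commutes, ← Algebra.smul_def]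
      rfl
    | add u v hu hv => simp only [map_add, hu, hv]
  have claim3 : F.comp (TensorProduct.assoc k (A δ⁻¹) (A δ) (A δ⁻¹)).toLinearMap = G := by
    apply TensorProduct.ext_threefold; intro a b c
    simp only [hF, hG, LinearMap.comp_apply, LinearEquiv.coe_toLinearMap,
      TensorProduct.assoc_tmul, TensorProduct.map_tmul, LinearMap.id_apply,
      LinearMap.mul'_apply, mul_assoc]
  set z : A (δ⁻¹ * δ * δ⁻¹) := cast (congrArg A (by group : δ⁻¹ = δ⁻¹ * δ * δ⁻¹)) x with hz
  set y : A (δ⁻¹ * (δ * δ⁻¹)) := cast (congrArg A (mul_assoc δ⁻¹ δ δ⁻¹)) z with hy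
  have coas := T.coassoc δ⁻¹ δ δ⁻¹ z
  -- left-hand evaluation
  have e1 : G (TensorProduct.map (T.Δ δ⁻¹ δ).toLinearMap LinearMap.id
        (T.Δ (δ⁻¹ * δ) δ⁻¹ z)) = Tm T δ x := by
    rw [claim1]
    have hc : T.Δ 1 δ⁻¹ (cast (congrArg A (by rw [h1])) z) =
        TensorProduct.map (lcast k π A h1) (lcast k π A (rfl : δ⁻¹ = δ⁻¹))
          (T.Δ (δ⁻¹ * δ) δ⁻¹ z) := Δ_cast T h1 rfl z
    rw [lcast_rfl] at hc
    have : TensorProduct.map (T.ε.toLinearMap.comp (lcast k π A h1)) LinearMap.id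
        (T.Δ (δ⁻¹ * δ) δ⁻¹ z) =
        TensorProduct.map T.ε.toLinearMap LinearMap.id
          (T.Δ 1 δ⁻¹ (cast (congrArg A (by rw [h1])) z)) := by
      rw [hc, _root_.map_map, LinearMap.id_comp]
    rw [this]
    have := T.counit_left δ⁻¹ (cast (congrArg A (by rw [h1])) z)
    rw [this, hz, cast_cast, cast_cast, cast_eq]
  have e2 : F (TensorProduct.map LinearMap.id (T.Δ δ δ⁻¹).toLinearMap
        (T.Δ δ⁻¹ (δ * δ⁻¹) y)) = f x := by
    rw [claim2]
    have hc : T.Δ δ⁻¹ 1 (cast (congrArg A (by rw [h2])) y) =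
        TensorProduct.map (lcast k π A (rfl : δ⁻¹ = δ⁻¹)) (lcast k π A h2)
          (T.Δ δ⁻¹ (δ * δ⁻¹) y) := Δ_cast T rfl h2 y
    rw [lcast_rfl] at hc
    have : TensorProduct.map LinearMap.id (T.ε.toLinearMap.comp (lcast k π A h2))
        (T.Δ δ⁻¹ (δ * δ⁻¹) y) =
        TensorProduct.map LinearMap.id T.ε.toLinearMap
          (T.Δ δ⁻¹ 1 (cast (congrArg A (by rw [h2])) y)) := by
      rw [hc, _root_.map_map, LinearMap.id_comp]
    rw [this]
    have := T.counit_right δ⁻¹ (cast (congrArg A (by rw [h2])) y)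
    rw [this, hy, hz, cast_cast, cast_cast, cast_cast, cast_eq]
  have key : G (TensorProduct.map (T.Δ δ⁻¹ δ).toLinearMap LinearMap.id
      (T.Δ (δ⁻¹ * δ) δ⁻¹ z)) = F (TensorProduct.map LinearMap.id (T.Δ δ δ⁻¹).toLinearMap
      (T.Δ δ⁻¹ (δ * δ⁻¹) y)) := by
    conv_lhs => rw [← claim3]
    rw [LinearMap.comp_apply, LinearEquiv.coe_toLinearMap, coas, ← hy]
  rw [e1, e2] at key
  exact key.symm
end Unique

section PhiTm
set_option linter.unusedSectionVars false
variable {k : Type u} [Field k] {π : Type u} [Group π]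
variable {A : π → Type u} [∀ α, Ring (A α)] [∀ α, Algebra k (A α)]

theorem antipode_left' (T : TCoalgStruct k π A) (γ : π) (h : A (γ⁻¹ * γ)) :
    LinearMap.mul' k (A γ)
        (TensorProduct.map (Tm T γ) LinearMap.id (T.Δ γ⁻¹ γ h)) =
      algebraMap k (A γ) (T.ε (cast (congrArg A (inv_mul_cancel γ)) h)) :=
  T.antipode_left γ h

/-- `lcast` as a linear equivalence. -/
def lcastEquiv {α β : π} (h : α = β) : A α ≃ₗ[k] A β :=
  LinearEquiv.ofLinear (lcast k π A h) (lcast k π A h.symm)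
    (by subst h; rfl) (by subst h; rfl)

theorem phi_Tm (T : TCoalgStruct k π A) (β γ : π) :
    (T.φ β γ).toLinearMap.comp (Tm T γ) =
      (Tm T (β * γ * β⁻¹)).comp
        ((lcast k π A (by group : β * γ⁻¹ * β⁻¹ = (β * γ * β⁻¹)⁻¹)).comp
          (T.φ β γ⁻¹).toLinearMap) := by
  have hβγ : β * γ⁻¹ * β⁻¹ = (β * γ * β⁻¹)⁻¹ := by group
  have E1 : (β * γ * β⁻¹)⁻¹ * (β * γ * β⁻¹) = β * (γ⁻¹ * γ) * β⁻¹ := by group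
  have E2 : β * (γ⁻¹ * γ) * β⁻¹ = β * γ⁻¹ * β⁻¹ * (β * γ * β⁻¹) := by group
  set e : A γ⁻¹ ≃ₗ[k] A ((β * γ * β⁻¹)⁻¹) :=
    (LinearEquiv.ofBijective (T.φ β γ⁻¹).toLinearMap (T.φ_bij β γ⁻¹)).trans
      (lcastEquiv hβγ) with he
  set f : A ((β * γ * β⁻¹)⁻¹) →ₗ[k] A (β * γ * β⁻¹) :=
    ((T.φ β γ).toLinearMap.comp (Tm T γ)).comp (e.symm.toLinearMap) with hfdef
  have hcomp : f.comp ((lcast k π A hβγ).comp (T.φ β γ⁻¹).toLinearMap) =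
      (T.φ β γ).toLinearMap.comp (Tm T γ) := by
    apply LinearMap.ext; intro x
    have hex : e x = lcast k π A hβγ (T.φ β γ⁻¹ x) := rfl
    show f (lcast k π A hβγ (T.φ β γ⁻¹ x)) = T.φ β γ (Tm T γ x)
    rw [← hex, hfdef]
    show T.φ β γ (Tm T γ (e.symm (e x))) = T.φ β γ (Tm T γ x)
    rw [e.symm_apply_apply]
  have hf : ∀ h : A ((β * γ * β⁻¹)⁻¹ * (β * γ * β⁻¹)),
      LinearMap.mul' k (A (β * γ * β⁻¹))
          (TensorProduct.map f LinearMap.id (T.Δ (β * γ * β⁻¹)⁻¹ (β * γ * β⁻¹) h)) =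
        algebraMap k (A (β * γ * β⁻¹))
          (T.ε (cast (congrArg A (inv_mul_cancel (β * γ * β⁻¹))) h)) := by
    intro h
    obtain ⟨h₀, hh₀⟩ := (T.φ_bij β (γ⁻¹ * γ)).2 (cast (congrArg A E1) h)
    have hh : h = cast (congrArg A E1.symm) (T.φ β (γ⁻¹ * γ) h₀) := by
      rw [hh₀, cast_cast, cast_eq]
    have hΔ : T.Δ (β * γ * β⁻¹)⁻¹ (β * γ * β⁻¹) h =
        TensorProduct.map ((lcast k π A hβγ).comp (T.φ β γ⁻¹).toLinearMap)
          (T.φ β γ).toLinearMap (T.Δ γ⁻¹ γ h₀) := by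
      have c1 := Δ_cast T hβγ (rfl : β * γ * β⁻¹ = β * γ * β⁻¹)
        (cast (congrArg A E2) (T.φ β (γ⁻¹ * γ) h₀))
      rw [lcast_rfl] at c1
      have c2 := T.φ_comul β γ⁻¹ γ h₀
      rw [hh]
      have hcc : (cast (congrArg A E1.symm) (T.φ β (γ⁻¹ * γ) h₀) :
          A ((β * γ * β⁻¹)⁻¹ * (β * γ * β⁻¹))) =
          cast (congrArg A (by rw [hβγ] :
              β * γ⁻¹ * β⁻¹ * (β * γ * β⁻¹) = (β * γ * β⁻¹)⁻¹ * (β * γ * β⁻¹)))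
            (cast (congrArg A E2) (T.φ β (γ⁻¹ * γ) h₀)) := by
        rw [cast_cast]
      rw [hcc, c1, ← c2, _root_.map_map, LinearMap.id_comp]
    rw [hΔ, _root_.map_map, hcomp]
    have hreshape : TensorProduct.map ((T.φ β γ).toLinearMap.comp (Tm T γ))
        (LinearMap.id.comp (T.φ β γ).toLinearMap) (T.Δ γ⁻¹ γ h₀) =
        TensorProduct.map (T.φ β γ).toLinearMap (T.φ β γ).toLinearMap
          (TensorProduct.map (Tm T γ) LinearMap.id (T.Δ γ⁻¹ γ h₀)) := by
      rw [_root_.map_map, LinearMap.comp_id, LinearMap.id_comp]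
    rw [hreshape, ← algHom_mul', antipode_left' T γ h₀, AlgHom.commutes]
    have hε : T.ε (cast (congrArg A (inv_mul_cancel (β * γ * β⁻¹))) h) =
        T.ε (cast (congrArg A (inv_mul_cancel γ)) h₀) := by
      rw [hh, cast_cast]
      have hsnd := phi_cast_snd T β (inv_mul_cancel γ) h₀
      have hcc2 : cast ((congrArg A E1.symm).trans
            (congrArg A (inv_mul_cancel (β * γ * β⁻¹)))) (T.φ β (γ⁻¹ * γ) h₀) =
          cast (congrArg A (by group : β * 1 * β⁻¹ = 1))
            (T.φ β 1 (cast (congrArg A (inv_mul_cancel γ)) h₀)) := by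
        rw [hsnd, cast_cast]
      rw [hcc2, T.φ_counit]
    rw [hε]
  have huniq := Tm_unique T (β * γ * β⁻¹) f hf
  rw [huniq] at hcomp
  exact hcomp.symm
end PhiTm

section Main
set_option linter.unusedSectionVars false
variable {k : Type u} [Field k] {π : Type u} [Group π]
variable {A : π → Type u} [∀ α, Ring (A α)] [∀ α, Algebra k (A α)]

theorem R_cast (T : TCoalgStruct k π A) (Q : QTStruct k π A T) {b b' : π}
    (hb : b = b') (a : π) :
    Q.R a b' = TensorProduct.map LinearMap.id (lcast k π A hb) (Q.R a b) := by
  subst hb; rw [lcast_rfl, TensorProduct.map_id, LinearMap.id_apply]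

end Main


/-- the conjugation maps the Drinfeld elements to each other:
`φ_β(u_α) = u_{βαβ⁻¹}`. -/
theorem phi_drinfeld
    (A : π → Type u) [∀ α, Ring (A α)] [∀ α, Algebra k (A α)]
    (T : TCoalgStruct k π A) (Q : QTStruct k π A T) (α β : π) :
    T.φ β α (drinfeld k π A T Q α) = drinfeld k π A T Q (β * α * β⁻¹) := by
  have r : β * α⁻¹ * β⁻¹ = (β * α * β⁻¹)⁻¹ := by group
  unfold drinfeld
  rw [algHom_mul', comm_map, _root_.map_map, LinearMap.comp_id]
  have hR : Q.R (β * α * β⁻¹) (β * α * β⁻¹)⁻¹ =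
      TensorProduct.map (T.φ β α).toLinearMap
        ((lcast k π A r).comp (T.φ β α⁻¹).toLinearMap) (Q.R α α⁻¹) := by
    rw [R_cast T Q r (β * α * β⁻¹), ← Q.R_phi β α α⁻¹, _root_.map_map, LinearMap.id_comp]
  rw [hR, _root_.map_map, LinearMap.id_comp]
  have hkey : (T.φ β α).toLinearMap.comp
      ((lcast k π A (inv_inv α)).comp ((T.s α⁻¹).comp
        ((lcast k π A (by group : α * α⁻¹ * α⁻¹ = α⁻¹)).comp
          (T.φ α α⁻¹).toLinearMap))) =
      ((lcast k π A (inv_inv (β * α * β⁻¹))).comp ((T.s (β * α * β⁻¹)⁻¹).comp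
        ((lcast k π A (by group :
            (β * α * β⁻¹) * (β * α * β⁻¹)⁻¹ * (β * α * β⁻¹)⁻¹ = (β * α * β⁻¹)⁻¹)).comp
          (T.φ (β * α * β⁻¹) (β * α * β⁻¹)⁻¹).toLinearMap))).comp
        ((lcast k π A r).comp (T.φ β α⁻¹).toLinearMap) := by
    show (T.φ β α).toLinearMap.comp
        ((Tm T α).comp ((lcast k π A (by group : α * α⁻¹ * α⁻¹ = α⁻¹)).comp
          (T.φ α α⁻¹).toLinearMap)) =
      ((Tm T (β * α * β⁻¹)).comp ((lcast k π A (by group :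
            (β * α * β⁻¹) * (β * α * β⁻¹)⁻¹ * (β * α * β⁻¹)⁻¹ = (β * α * β⁻¹)⁻¹)).comp
          (T.φ (β * α * β⁻¹) (β * α * β⁻¹)⁻¹).toLinearMap)).comp
        ((lcast k π A r).comp (T.φ β α⁻¹).toLinearMap)
    apply LinearMap.ext; intro x
    simp only [LinearMap.comp_apply, AlgHom.toLinearMap_apply]
    have PT := LinearMap.congr_fun (phi_Tm T β α)
      (lcast k π A (by group : α * α⁻¹ * α⁻¹ = α⁻¹) (T.φ α α⁻¹ x))
    simp only [LinearMap.comp_apply, AlgHom.toLinearMap_apply] at PT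
    rw [PT]
    congr 1
    simp only [lcast_apply]
    rw [phi_cast_snd T β (by group : α * α⁻¹ * α⁻¹ = α⁻¹) (T.φ α α⁻¹ x)]
    rw [phi_cast_snd T (β * α * β⁻¹) r (T.φ β α⁻¹ x)]
    have m1 := T.φ_mul β α α⁻¹ x
    have m1' : T.φ β (α * α⁻¹ * α⁻¹) (T.φ α α⁻¹ x) =
        cast (congrArg A (by group :
            β * α * α⁻¹ * (β * α)⁻¹ = β * (α * α⁻¹ * α⁻¹) * β⁻¹))
          (T.φ (β * α) α⁻¹ x) := by
      rw [← m1, cast_cast, cast_eq]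
    have m2 := T.φ_mul (β * α * β⁻¹) β α⁻¹ x
    have m3 := phi_cast_fst T (by group : β * α = β * α * β⁻¹ * β) α⁻¹ x
    have m2' : T.φ (β * α * β⁻¹) (β * α⁻¹ * β⁻¹) (T.φ β α⁻¹ x) =
        cast (congrArg A (by group :
            β * α * β⁻¹ * β * α⁻¹ * (β * α * β⁻¹ * β)⁻¹ =
              β * α * β⁻¹ * (β * α⁻¹ * β⁻¹) * (β * α * β⁻¹)⁻¹))
          (cast (congrArg A (by group :
              β * α * α⁻¹ * (β * α)⁻¹ = β * α * β⁻¹ * β * α⁻¹ * (β * α * β⁻¹ * β)⁻¹))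
            (T.φ (β * α) α⁻¹ x)) := by
      rw [← m3, ← m2, cast_cast, cast_eq]
    rw [m1', m2']
    simp only [cast_cast]
  rw [hkey]
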